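/- Let H be a complex inner product space and let f, g, k : ℝ → H be functions with f ω ≠ 0, g ω ≠ 0, k ω ≠ 0 for every ω, such that the three functions ω ↦ C(f ω, g ω), ω ↦ C(g ω, k ω), ω ↦ C(f ω, k ω) are measurable on [−π, π]. Define d(f, g) = ( (1/(2π)) · ∫_{−π}^{π} (1 − C(f ω, g ω)) dω )^{1/2}, and similarly for the other pairs. Then: (i) d(f, g) ≥ 0; (ii) d(f, g) = d(g, f); (iii) d(f, f) = 0; (iv) d(f, k) ≤ d(f, g) + d(g, k). -/

import Mathlib

open scoped InnerProductSpace

/-- The coherence of two vectors of a complex inner product space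
(inner product conjugate-linear in the first argument):
`C(u, v) = ‖⟪u, v⟫‖² / (‖u‖² · ‖v‖²)`. -/
noncomputable def coherence {H : Type*} [NormedAddCommGroup H]
    [InnerProductSpace ℂ H] (u v : H) : ℝ :=
  ‖⟪u, v⟫_ℂ‖ ^ 2 / (‖u‖ ^ 2 * ‖v‖ ^ 2)

/-- The coherence-based distance between two frequency-indexed families of
vectors: `d(f, g) = ( (1/(2π)) ∫_{-π}^{π} (1 − C(f ω, g ω)) dω )^{1/2}`. -/
noncomputable def cohDist {H : Type*} [NormedAddCommGroup H]
    [InnerProductSpace ℂ H] (f g : ℝ → H) : ℝ :=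
  Real.sqrt ((1 / (2 * Real.pi)) *
    ∫ ω in (-Real.pi)..Real.pi, (1 - coherence (f ω) (g ω)))

section Aux

variable {H : Type*} [NormedAddCommGroup H] [InnerProductSpace ℂ H]

lemma aux_coherence_nonneg (u v : H) : 0 ≤ coherence u v := by
  unfold coherence; positivity

lemma aux_coherence_le_one (u v : H) : coherence u v ≤ 1 := by
  unfold coherence
  rcases eq_or_ne (‖u‖ ^ 2 * ‖v‖ ^ 2) 0 with h | h
  · rw [h, div_zero]; norm_num
  · rw [div_le_one (lt_of_le_of_ne (by positivity) (Ne.symm h))]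
    have := norm_inner_le_norm (𝕜 := ℂ) u v
    nlinarith [norm_nonneg (⟪u, v⟫_ℂ), norm_nonneg u, norm_nonneg v]

lemma aux_coherence_comm (u v : H) : coherence u v = coherence v u := by
  unfold coherence
  rw [norm_inner_symm, mul_comm]

lemma aux_coherence_self {u : H} (hu : u ≠ 0) : coherence u u = 1 := by
  unfold coherence
  have h0 : (0 : ℝ) < ‖u‖ := norm_pos_iff.2 hu
  rw [inner_self_eq_norm_sq_to_K]
  simp only [norm_pow, Complex.norm_ofNat, Complex.norm_real, Real.norm_eq_abs,
    abs_of_nonneg h0.le]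
  field_simp
  ring_nf
  simp [abs_of_nonneg h0.le]

lemma aux_norm_normalize (u : H) (hu : u ≠ 0) : ‖(‖u‖⁻¹ : ℂ) • u‖ = 1 := by
  have hu0 : (0 : ℝ) < ‖u‖ := norm_pos_iff.2 hu
  rw [norm_smul, norm_inv, Complex.norm_real, Real.norm_eq_abs, abs_of_nonneg hu0.le]
  field_simp

lemma aux_coherence_normalize (u v : H) (hu : u ≠ 0) (hv : v ≠ 0) :
    coherence ((‖u‖⁻¹ : ℂ) • u) ((‖v‖⁻¹ : ℂ) • v) = coherence u v := by
  have hu0 : (0 : ℝ) < ‖u‖ := norm_pos_iff.2 hu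
  have hv0 : (0 : ℝ) < ‖v‖ := norm_pos_iff.2 hv
  unfold coherence
  rw [aux_norm_normalize u hu, aux_norm_normalize v hv]
  rw [inner_smul_left, inner_smul_right, norm_mul, norm_mul, RCLike.norm_conj]
  simp only [norm_inv, Complex.norm_real, Real.norm_eq_abs, abs_of_nonneg hu0.le,
    abs_of_nonneg hv0.le, one_pow, mul_one, div_one]
  field_simp

lemma aux_norm_sub_proj_sq (u v : H) (hu : ‖u‖ = 1) (hv : ‖v‖ = 1) :
    ‖u - ⟪v, u⟫_ℂ • v‖ ^ 2 = 1 - ‖⟪u, v⟫_ℂ‖ ^ 2 := by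
  have h : ⟪v, v⟫_ℂ = 1 := by rw [inner_self_eq_norm_sq_to_K, hv]; norm_num
  have hu' : ⟪u, u⟫_ℂ = 1 := by rw [inner_self_eq_norm_sq_to_K, hu]; norm_num
  have h2 : (⟪u - ⟪v, u⟫_ℂ • v, u - ⟪v, u⟫_ℂ • v⟫_ℂ) =
      ((1 - ‖⟪u, v⟫_ℂ‖ ^ 2 : ℝ) : ℂ) := by
    simp only [inner_sub_left, inner_sub_right, inner_smul_left, inner_smul_right,
      inner_conj_symm, h, hu', mul_one]
    rw [← inner_conj_symm u v, RCLike.norm_conj]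
    rw [Complex.ofReal_sub, Complex.ofReal_one, ← Complex.normSq_eq_norm_sq, ← Complex.mul_conj]
    ring
  have h3 := inner_self_eq_norm_sq_to_K (𝕜 := ℂ) (x := u - ⟪v, u⟫_ℂ • v)
  rw [h2] at h3
  have h4 : ((1 - ‖⟪u, v⟫_ℂ‖ ^ 2 : ℝ) : ℂ) = ((‖u - ⟪v, u⟫_ℂ • v‖ ^ 2 : ℝ) : ℂ) := by
    rw [h3]; norm_cast
  exact (Complex.ofReal_inj.mp h4).symm

lemma aux_key_ineq (u v w : H) (hu : ‖u‖ = 1) (hv : ‖v‖ = 1) (hw : ‖w‖ = 1) :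
    ‖⟪u, v⟫_ℂ‖ * ‖⟪v, w⟫_ℂ‖ -
      Real.sqrt (1 - ‖⟪u, v⟫_ℂ‖ ^ 2) * Real.sqrt (1 - ‖⟪v, w⟫_ℂ‖ ^ 2) ≤ ‖⟪u, w⟫_ℂ‖ := by
  have hvv : ⟪v, v⟫_ℂ = 1 := by rw [inner_self_eq_norm_sq_to_K, hv]; norm_num
  have hexp : ⟪u - ⟪v, u⟫_ℂ • v, w - ⟪v, w⟫_ℂ • v⟫_ℂ = ⟪u, w⟫_ℂ - ⟪u, v⟫_ℂ * ⟪v, w⟫_ℂ := by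
    simp only [inner_sub_left, inner_sub_right, inner_smul_left, inner_smul_right,
      inner_conj_symm, hvv, mul_one]
    ring
  have hCS := norm_inner_le_norm (𝕜 := ℂ) (u - ⟪v, u⟫_ℂ • v) (w - ⟪v, w⟫_ℂ • v)
  rw [hexp] at hCS
  have h1 : ‖u - ⟪v, u⟫_ℂ • v‖ = Real.sqrt (1 - ‖⟪u, v⟫_ℂ‖ ^ 2) := by
    rw [← aux_norm_sub_proj_sq u v hu hv, Real.sqrt_sq (norm_nonneg _)]
  have h2 : ‖w - ⟪v, w⟫_ℂ • v‖ = Real.sqrt (1 - ‖⟪w, v⟫_ℂ‖ ^ 2) := by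
    rw [← aux_norm_sub_proj_sq w v hw hv, Real.sqrt_sq (norm_nonneg _)]
  rw [h1, h2, norm_inner_symm w v] at hCS
  have htri : ‖⟪u, v⟫_ℂ * ⟪v, w⟫_ℂ‖ - ‖⟪u, w⟫_ℂ - ⟪u, v⟫_ℂ * ⟪v, w⟫_ℂ‖ ≤ ‖⟪u, w⟫_ℂ‖ := by
    have := norm_sub_norm_le (⟪u, v⟫_ℂ * ⟪v, w⟫_ℂ) (⟪u, v⟫_ℂ * ⟪v, w⟫_ℂ - ⟪u, w⟫_ℂ)
    simp only [sub_sub_cancel] at this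
    rw [norm_sub_rev] at this
    linarith
  rw [norm_mul] at htri
  linarith

lemma aux_sin_tri (a b c : ℝ) (ha : 0 ≤ a) (ha1 : a ≤ 1) (hb : 0 ≤ b) (hb1 : b ≤ 1)
    (hc : 0 ≤ c) (hkey : a * b - Real.sqrt (1 - a ^ 2) * Real.sqrt (1 - b ^ 2) ≤ c) :
    Real.sqrt (1 - c ^ 2) ≤ Real.sqrt (1 - a ^ 2) + Real.sqrt (1 - b ^ 2) := by
  set sA := Real.sqrt (1 - a ^ 2) with hsA
  set sB := Real.sqrt (1 - b ^ 2) with hsB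
  have hsA0 : 0 ≤ sA := Real.sqrt_nonneg _
  have hsB0 : 0 ≤ sB := Real.sqrt_nonneg _
  have hsA2 : sA ^ 2 = 1 - a ^ 2 := Real.sq_sqrt (by nlinarith)
  have hsB2 : sB ^ 2 = 1 - b ^ 2 := Real.sq_sqrt (by nlinarith)
  have hmain : 1 - c ^ 2 ≤ (sA + sB) ^ 2 := by
    rcases le_or_gt (a * b) (sA * sB) with hcase | hcase
    · nlinarith [sq_nonneg (a - b), sq_nonneg c]
    · have h1 : 0 ≤ a * b - sA * sB := le_of_lt (by linarith)
      have h2 : (a * b - sA * sB) ^ 2 ≤ c ^ 2 := by nlinarith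
      have h3 : 1 - (a * b - sA * sB) ^ 2 = (a * sB + b * sA) ^ 2 := by nlinarith
      have h4 : a * sB + b * sA ≤ sA + sB := by
        nlinarith [mul_nonneg (sub_nonneg.2 ha1) hsB0, mul_nonneg (sub_nonneg.2 hb1) hsA0]
      have h5 : 0 ≤ a * sB + b * sA := by positivity
      have h6 : (a * sB + b * sA) ^ 2 ≤ (sA + sB) ^ 2 := by nlinarith
      linarith
  calc Real.sqrt (1 - c ^ 2) ≤ Real.sqrt ((sA + sB) ^ 2) := Real.sqrt_le_sqrt hmain
    _ = sA + sB := Real.sqrt_sq (by linarith)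

/-- Pointwise triangle inequality for `√(1 - coherence)`. -/
lemma aux_sqrt_coherence_triangle (u v w : H) (hu : u ≠ 0) (hv : v ≠ 0) (hw : w ≠ 0) :
    Real.sqrt (1 - coherence u w) ≤
      Real.sqrt (1 - coherence u v) + Real.sqrt (1 - coherence v w) := by
  set u' := ((‖u‖⁻¹ : ℂ) • u) with hu'
  set v' := ((‖v‖⁻¹ : ℂ) • v) with hv'
  set w' := ((‖w‖⁻¹ : ℂ) • w) with hw'
  have hu1 : ‖u'‖ = 1 := aux_norm_normalize u hu
  have hv1 : ‖v'‖ = 1 := aux_norm_normalize v hv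
  have hw1 : ‖w'‖ = 1 := aux_norm_normalize w hw
  rw [← aux_coherence_normalize u w hu hw, ← aux_coherence_normalize u v hu hv,
    ← aux_coherence_normalize v w hv hw]
  have hca : coherence u' v' = ‖⟪u', v'⟫_ℂ‖ ^ 2 := by
    unfold coherence; rw [hu1, hv1]; norm_num
  have hcb : coherence v' w' = ‖⟪v', w'⟫_ℂ‖ ^ 2 := by
    unfold coherence; rw [hv1, hw1]; norm_num
  have hcc : coherence u' w' = ‖⟪u', w'⟫_ℂ‖ ^ 2 := by
    unfold coherence; rw [hu1, hw1]; norm_num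
  rw [hca, hcb, hcc]
  refine aux_sin_tri _ _ _ (norm_nonneg _) ?_ (norm_nonneg _) ?_ (norm_nonneg _)
    (aux_key_ineq u' v' w' hu1 hv1 hw1)
  · have := norm_inner_le_norm (𝕜 := ℂ) u' v'; rw [hu1, hv1] at this; linarith
  · have := norm_inner_le_norm (𝕜 := ℂ) v' w'; rw [hv1, hw1] at this; linarith

end Aux

/-- the coherence-based distance is a (pseudo)metric:
it is nonnegative, symmetric, vanishes on the diagonal and satisfies the
triangle inequality. -/
theorem cohDist_is_pseudometric
    {H : Type*} [NormedAddCommGroup H] [InnerProductSpace ℂ H]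
    (f g k : ℝ → H)
    (hf : ∀ ω, f ω ≠ 0) (hg : ∀ ω, g ω ≠ 0) (hk : ∀ ω, k ω ≠ 0)
    (mfg : Measurable fun ω => coherence (f ω) (g ω))
    (mgk : Measurable fun ω => coherence (g ω) (k ω))
    (mfk : Measurable fun ω => coherence (f ω) (k ω)) :
    0 ≤ cohDist f g ∧
    cohDist f g = cohDist g f ∧
    cohDist f f = 0 ∧
    cohDist f k ≤ cohDist f g + cohDist g k := by
  have hπ : -Real.pi ≤ Real.pi := by linarith [Real.pi_pos]
  refine ⟨Real.sqrt_nonneg _, ?_, ?_, ?_⟩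
  · -- symmetry
    have h : (fun ω => 1 - coherence (f ω) (g ω)) = fun ω => 1 - coherence (g ω) (f ω) :=
      funext fun ω => by rw [aux_coherence_comm]
    rw [cohDist, cohDist, h]
  · -- diagonal
    have h : ∀ ω, (1 : ℝ) - coherence (f ω) (f ω) = 0 := fun ω => by
      rw [aux_coherence_self (hf ω)]; ring
    rw [cohDist]
    simp [h]
  · -- triangle inequality
    set μ := (MeasureTheory.volume : MeasureTheory.Measure ℝ).restrict
      (Set.Ioc (-Real.pi) Real.pi) with hμ
    set F : ℝ → ℝ := fun ω => 1 - coherence (f ω) (g ω) with hF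
    set G : ℝ → ℝ := fun ω => 1 - coherence (g ω) (k ω) with hG
    set K : ℝ → ℝ := fun ω => 1 - coherence (f ω) (k ω) with hK
    have hF0 : ∀ ω, 0 ≤ F ω := fun ω => sub_nonneg.2 (aux_coherence_le_one _ _)
    have hG0 : ∀ ω, 0 ≤ G ω := fun ω => sub_nonneg.2 (aux_coherence_le_one _ _)
    have hK0 : ∀ ω, 0 ≤ K ω := fun ω => sub_nonneg.2 (aux_coherence_le_one _ _)
    have hF1 : ∀ ω, F ω ≤ 1 := fun ω => by
      have := aux_coherence_nonneg (f ω) (g ω); simp [hF]; linarith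
    have hG1 : ∀ ω, G ω ≤ 1 := fun ω => by
      have := aux_coherence_nonneg (g ω) (k ω); simp [hG]; linarith
    have hK1 : ∀ ω, K ω ≤ 1 := fun ω => by
      have := aux_coherence_nonneg (f ω) (k ω); simp [hK]; linarith
    have mF : Measurable F := measurable_const.sub mfg
    have mG : Measurable G := measurable_const.sub mgk
    have mK : Measurable K := measurable_const.sub mfk
    -- integrability of bounded measurable functions on a finite measure
    have hint : ∀ (φ : ℝ → ℝ), Measurable φ → (∀ ω, 0 ≤ φ ω) → (∀ ω, φ ω ≤ 1) →
        MeasureTheory.Integrable φ μ := by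
      intro φ mφ h0 h1
      refine (MeasureTheory.integrable_const (1 : ℝ)).mono' mφ.aestronglyMeasurable ?_
      exact Filter.Eventually.of_forall fun ω => by
        rw [Real.norm_eq_abs, abs_of_nonneg (h0 ω)]; exact h1 ω
    have intF : MeasureTheory.Integrable F μ := hint F mF hF0 hF1
    have intG : MeasureTheory.Integrable G μ := hint G mG hG0 hG1
    have intK : MeasureTheory.Integrable K μ := hint K mK hK0 hK1
    set p : ℝ → ℝ := fun ω => Real.sqrt (F ω) with hp
    set q : ℝ → ℝ := fun ω => Real.sqrt (G ω) with hq
    have mp : Measurable p := Real.continuous_sqrt.measurable.comp mF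
    have mq : Measurable q := Real.continuous_sqrt.measurable.comp mG
    have hp1 : ∀ ω, p ω ≤ 1 := fun ω => by
      rw [hp]; simpa using Real.sqrt_le_sqrt (hF1 ω)
    have hq1 : ∀ ω, q ω ≤ 1 := fun ω => by
      rw [hq]; simpa using Real.sqrt_le_sqrt (hG1 ω)
    have intpq : MeasureTheory.Integrable (fun ω => p ω * q ω) μ :=
      hint _ (mp.mul mq) (fun ω => mul_nonneg (Real.sqrt_nonneg _) (Real.sqrt_nonneg _))
        (fun ω => mul_le_one₀ (hp1 ω) (Real.sqrt_nonneg _) (hq1 ω))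
    have memp : MeasureTheory.MemLp p (ENNReal.ofReal 2) μ :=
      MeasureTheory.MemLp.of_bound mp.aestronglyMeasurable 1
        (Filter.Eventually.of_forall fun ω => by
          rw [Real.norm_eq_abs, abs_of_nonneg (Real.sqrt_nonneg _)]; exact hp1 ω)
    have memq : MeasureTheory.MemLp q (ENNReal.ofReal 2) μ :=
      MeasureTheory.MemLp.of_bound mq.aestronglyMeasurable 1
        (Filter.Eventually.of_forall fun ω => by
          rw [Real.norm_eq_abs, abs_of_nonneg (Real.sqrt_nonneg _)]; exact hq1 ω)
    have hconj : Real.HolderConjugate 2 2 := Real.HolderConjugate.two_two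
    have hCS := MeasureTheory.integral_mul_le_Lp_mul_Lq_of_nonneg hconj
      (Filter.Eventually.of_forall fun ω => Real.sqrt_nonneg (F ω))
      (Filter.Eventually.of_forall fun ω => Real.sqrt_nonneg (G ω)) memp memq
    have hpF : (fun ω => p ω ^ (2 : ℝ)) = F := funext fun ω => by
      rw [hp, Real.rpow_two, Real.sq_sqrt (hF0 ω)]
    have hqG : (fun ω => q ω ^ (2 : ℝ)) = G := funext fun ω => by
      rw [hq, Real.rpow_two, Real.sq_sqrt (hG0 ω)]
    simp only [Real.rpow_two, Real.sq_sqrt, hF0, hG0] at hCS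
    -- now hCS : ∫ p*q ∂μ ≤ (∫ F ∂μ) ^ (1/2 : ℝ) * (∫ G ∂μ) ^ (1/2 : ℝ)
    set P := ∫ ω, F ω ∂μ with hP
    set Q := ∫ ω, G ω ∂μ with hQ
    set R := ∫ ω, K ω ∂μ with hR
    have hP0 : 0 ≤ P := MeasureTheory.integral_nonneg hF0
    have hQ0 : 0 ≤ Q := MeasureTheory.integral_nonneg hG0
    have hR0 : 0 ≤ R := MeasureTheory.integral_nonneg hK0
    rw [← Real.sqrt_eq_rpow, ← Real.sqrt_eq_rpow] at hCS
    -- pointwise triangle, squared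
    have hpt : ∀ ω, K ω ≤ F ω + G ω + 2 * (p ω * q ω) := by
      intro ω
      have htr := aux_sqrt_coherence_triangle (f ω) (g ω) (k ω) (hf ω) (hg ω) (hk ω)
      have hsq : K ω = Real.sqrt (K ω) ^ 2 := (Real.sq_sqrt (hK0 ω)).symm
      have h2 : Real.sqrt (K ω) ^ 2 ≤ (p ω + q ω) ^ 2 := by
        refine pow_le_pow_left₀ (Real.sqrt_nonneg _) ?_ 2
        exact htr
      have hF2 : p ω ^ 2 = F ω := Real.sq_sqrt (hF0 ω)
      have hG2 : q ω ^ 2 = G ω := Real.sq_sqrt (hG0 ω)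
      nlinarith [h2, hsq]
    have hRle : R ≤ P + Q + 2 * ∫ ω, p ω * q ω ∂μ := by
      have h1 : R ≤ ∫ ω, (F ω + G ω + 2 * (p ω * q ω)) ∂μ :=
        MeasureTheory.integral_mono intK ((intF.add intG).add (intpq.const_mul 2)) hpt
      have h2 : (∫ ω, (F ω + G ω + 2 * (p ω * q ω)) ∂μ)
          = P + Q + 2 * ∫ ω, p ω * q ω ∂μ := by
        rw [MeasureTheory.integral_add (f := fun ω => F ω + G ω)
            (g := fun ω => 2 * (p ω * q ω)) (intF.add intG) (intpq.const_mul 2),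
          MeasureTheory.integral_add intF intG, MeasureTheory.integral_const_mul]
      linarith
    have hRfin : R ≤ (Real.sqrt P + Real.sqrt Q) ^ 2 := by
      have hsP : Real.sqrt P ^ 2 = P := Real.sq_sqrt hP0
      have hsQ : Real.sqrt Q ^ 2 = Q := Real.sq_sqrt hQ0
      nlinarith [hCS, hRle]
    -- translate cohDist into set integrals
    have hc : (0 : ℝ) ≤ 1 / (2 * Real.pi) := by positivity
    have hd : ∀ (φ ψ : ℝ → H),
        cohDist φ ψ = Real.sqrt (1 / (2 * Real.pi)) *
          Real.sqrt (∫ ω, (1 - coherence (φ ω) (ψ ω)) ∂μ) := by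
      intro φ ψ
      rw [cohDist, intervalIntegral.integral_of_le hπ, Real.sqrt_mul hc]
    rw [hd f k, hd f g, hd g k, ← mul_add]
    refine mul_le_mul_of_nonneg_left ?_ (Real.sqrt_nonneg _)
    calc Real.sqrt (∫ ω, (1 - coherence (f ω) (k ω)) ∂μ)
        = Real.sqrt R := rfl
      _ ≤ Real.sqrt ((Real.sqrt P + Real.sqrt Q) ^ 2) := Real.sqrt_le_sqrt hRfin
      _ = Real.sqrt P + Real.sqrt Q :=
          Real.sqrt_sq (by positivity)
      _ = _ := rfl
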